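/- Let k be a field of characteristic zero, A = k[X₀,X₁] the polynomial ring in two variables over k, I ⊆ A an ideal, R = A/I, and π : A → R the quotient map. Suppose τ̃ is a k-derivation of A with τ̃(I) ⊆ I, and let τ be the induced k-derivation of R (i.e. τ(π(a)) = π(τ̃(a)) for all a ∈ A). Assume that the map R → Der_k(R), r ↦ r·τ, is bijective, and that Der_k(R) is a simple Lie algebra over k. Then for every D ∈ Der_k(R) there exist f, g ∈ R such that D = ⁅τ, f·τ⁆ + ⁅π(X₁)·τ, g·τ⁆. -/

import Mathlib

set_option synthInstance.maxHeartbeats 1000000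
set_option maxHeartbeats 2000000
set_option linter.unusedSectionVars false

section Aux
variable {k : Type*} [Field k] [CharZero k] {R : Type*} [CommRing R] [Algebra k R]

private lemma aux_brk (τ : Derivation k R R) (a b : R) :
    ⁅a • τ, b • τ⁆ = (a * τ b - b * τ a) • τ := by
  ext c
  simp only [Derivation.commutator_apply, Derivation.smul_apply, Derivation.leibniz,
    smul_eq_mul]
  ring

private lemma aux_brk1 (τ : Derivation k R R) (b : R) :
    ⁅τ, b • τ⁆ = (τ b) • τ := by
  have h := aux_brk τ 1 b
  simpa using h

end Aux

/-- Explicit two-bracket decomposition from the plane-curve case of Theorem A. -/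
theorem stmt_3 (k : Type*) [Field k] [CharZero k]
    (I : Ideal (MvPolynomial (Fin 2) k))
    (τ' : Derivation k (MvPolynomial (Fin 2) k) (MvPolynomial (Fin 2) k))
    (hτ' : ∀ a ∈ I, τ' a ∈ I)
    (τ : Derivation k (MvPolynomial (Fin 2) k ⧸ I) (MvPolynomial (Fin 2) k ⧸ I))
    (hτ : ∀ a : MvPolynomial (Fin 2) k,
      τ (Ideal.Quotient.mk I a) = Ideal.Quotient.mk I (τ' a))
    (hbij : Function.Bijective
      (fun r : MvPolynomial (Fin 2) k ⧸ I => r • τ))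
    (hsimple : LieAlgebra.IsSimple k
      (Derivation k (MvPolynomial (Fin 2) k ⧸ I) (MvPolynomial (Fin 2) k ⧸ I)))
    (D : Derivation k (MvPolynomial (Fin 2) k ⧸ I) (MvPolynomial (Fin 2) k ⧸ I)) :
    ∃ f g : MvPolynomial (Fin 2) k ⧸ I,
      D = ⁅τ, f • τ⁆ + ⁅(Ideal.Quotient.mk I (MvPolynomial.X 1)) • τ, g • τ⁆ := by
  classical
  obtain ⟨-, hsurj⟩ := hbij
  set Q := MvPolynomial (Fin 2) k ⧸ I with hQ
  set x0 : Q := Ideal.Quotient.mk I (MvPolynomial.X 0) with hx0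
  set x1 : Q := Ideal.Quotient.mk I (MvPolynomial.X 1) with hx1
  -- the k-submodule {τ f + (x1 * τ g - g * τ x1)}
  let M : Submodule k Q :=
  { carrier := {r | ∃ f g : Q, r = τ f + (x1 * τ g - g * τ x1)}
    add_mem' := by
      rintro a b ⟨f, g, rfl⟩ ⟨f', g', rfl⟩
      exact ⟨f + f', g + g', by rw [map_add, map_add]; ring⟩
    zero_mem' := ⟨0, 0, by simp⟩
    smul_mem' := by
      rintro c r ⟨f, g, rfl⟩
      refine ⟨c • f, c • g, ?_⟩
      simp only [Derivation.map_smul, smul_add, smul_sub, mul_smul_comm, smul_mul_assoc] }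
  have hF1 : ∀ f : Q, τ f ∈ M := fun f => ⟨f, 0, by simp⟩
  have hF2 : ∀ g : Q, x1 * τ g - g * τ x1 ∈ M := fun g => ⟨0, g, by simp⟩
  have hF3 : ∀ c : Q, c * τ x1 ∈ M := by
    intro c
    have h2' : τ (x1 * c) - (x1 * τ c - c * τ x1) = (2 : k) • (c * τ x1) := by
      rw [Derivation.leibniz, two_smul]
      simp only [smul_eq_mul]
      ring
    have key : c * τ x1 = (2 : k)⁻¹ • (τ (x1 * c) - (x1 * τ c - c * τ x1)) := by
      rw [h2', smul_smul]
      norm_num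
    rw [key]
    exact M.smul_mem _ (M.sub_mem (hF1 _) (hF2 c))
  have hF4 : ∀ (n : ℕ) (c : Q), c * τ (x1 ^ n) ∈ M := by
    intro n
    induction n with
    | zero => intro c; simp only [pow_zero, Derivation.map_one_eq_zero, mul_zero]; exact M.zero_mem
    | succ n ih =>
      intro c
      have h : τ (x1 ^ (n + 1)) = x1 ^ n * τ x1 + x1 * τ (x1 ^ n) := by
        rw [pow_succ, Derivation.leibniz]
        simp only [smul_eq_mul]
      rw [h, mul_add]
      refine M.add_mem ?_ ?_
      · rw [← mul_assoc]; exact hF3 _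
      · rw [← mul_assoc]; exact ih (c * x1)
  have hF5 : ∀ (m n : ℕ), x0 ^ m * x1 ^ n * τ x0 ∈ M := by
    intro m n
    have hp : τ (x0 ^ (m + 1)) = ((m : k) + 1) • (x0 ^ m * τ x0) := by
      rw [Derivation.leibniz_pow]
      simp only [Nat.add_sub_cancel, smul_eq_mul]
      rw [← Nat.cast_smul_eq_nsmul k]
      norm_num
    have e1 : ((m : k) + 1) • (x0 ^ m * x1 ^ n * τ x0)
        = τ (x0 ^ (m + 1) * x1 ^ n) - x0 ^ (m + 1) * τ (x1 ^ n) := by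
      rw [Derivation.leibniz, hp]
      simp only [smul_eq_mul, mul_smul_comm]
      rw [add_sub_cancel_left]
      congr 1
      ring
    have hne : ((m : k) + 1) ≠ 0 := Nat.cast_add_one_ne_zero m
    have key : x0 ^ m * x1 ^ n * τ x0
        = ((m : k) + 1)⁻¹ • (τ (x0 ^ (m + 1) * x1 ^ n) - x0 ^ (m + 1) * τ (x1 ^ n)) := by
      rw [← e1, smul_smul, inv_mul_cancel₀ hne, one_smul]
    rw [key]
    exact M.smul_mem _ (M.sub_mem (hF1 _) (hF4 n _))
  have hmono : ∀ (u : Fin 2 →₀ ℕ) (a : k),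
      Ideal.Quotient.mk I (MvPolynomial.monomial u a) = a • (x0 ^ (u 0) * x1 ^ (u 1)) := by
    intro u a
    have h : (MvPolynomial.monomial u a : MvPolynomial (Fin 2) k)
        = MvPolynomial.C a * (MvPolynomial.X 0 ^ (u 0) * MvPolynomial.X 1 ^ (u 1)) := by
      rw [MvPolynomial.monomial_eq, Finsupp.prod_fintype _ _ (fun i => pow_zero _),
        Fin.prod_univ_two]
    rw [h, map_mul, map_mul, map_pow, map_pow]
    rw [show (Ideal.Quotient.mk I) (MvPolynomial.C a) = algebraMap k Q a from rfl,
      ← Algebra.smul_def, hx0, hx1]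
  have hF6 : ∀ b : Q, b * τ x0 ∈ M := by
    intro b
    obtain ⟨P, rfl⟩ : ∃ P, Ideal.Quotient.mk I P = b := Ideal.Quotient.mk_surjective b
    induction P using MvPolynomial.induction_on' with
    | monomial u a =>
      rw [hmono u a, smul_mul_assoc]
      exact M.smul_mem a (hF5 (u 0) (u 1))
    | add p q hp hq =>
      rw [map_add, add_mul]
      exact M.add_mem hp hq
  have hF7 : ∀ (P : MvPolynomial (Fin 2) k) (b : Q),
      b * τ (Ideal.Quotient.mk I P) ∈ M := by
    intro P
    induction P using MvPolynomial.induction_on with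
    | C a =>
      intro b
      rw [show (Ideal.Quotient.mk I) (MvPolynomial.C a) = algebraMap k Q a from rfl,
        Derivation.map_algebraMap, mul_zero]
      exact M.zero_mem
    | add p q hp hq =>
      intro b
      rw [map_add, map_add, mul_add]
      exact M.add_mem (hp b) (hq b)
    | mul_X p i hp =>
      intro b
      rw [map_mul, Derivation.leibniz]
      simp only [smul_eq_mul]
      rw [mul_add]
      refine M.add_mem ?_ ?_
      · rw [← mul_assoc]
        fin_cases i
        · exact hF6 _
        · exact hF3 _
      · rw [← mul_assoc]
        exact hp _
  have hF7' : ∀ a b : Q, b * τ a ∈ M := by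
    intro a b
    obtain ⟨P, rfl⟩ : ∃ P, Ideal.Quotient.mk I P = a := Ideal.Quotient.mk_surjective a
    exact hF7 P b
  -- the linear map r ↦ r • τ
  let ψ : Q →ₗ[k] Derivation k Q Q :=
  { toFun := fun r => r • τ
    map_add' := fun a b => add_smul a b τ
    map_smul' := fun a r => smul_assoc a r τ }
  -- Lie ideal
  let J : LieIdeal k (Derivation k Q Q) :=
  { toSubmodule := M.map ψ
    lie_mem := by
      intro E m hm
      obtain ⟨r, hr, rfl⟩ := Submodule.mem_map.mp hm
      obtain ⟨c, rfl⟩ := hsurj E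
      refine Submodule.mem_map.mpr ⟨c * τ r - r * τ c, M.sub_mem (hF7' r c) (hF7' c r), ?_⟩
      exact (aux_brk τ c r).symm }
  have hJtop : J = ⊤ := by
    rcases hsimple.eq_bot_or_eq_top J with hbot | htop
    · exfalso
      apply hsimple.non_abelian
      constructor
      intro E F
      obtain ⟨c, rfl⟩ := hsurj E
      obtain ⟨b, rfl⟩ := hsurj F
      have hmem : ⁅c • τ, b • τ⁆ ∈ J := by
        refine Submodule.mem_map.mpr ⟨c * τ b - b * τ c, M.sub_mem (hF7' b c) (hF7' c b), ?_⟩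
        exact (aux_brk τ c b).symm
      rw [hbot, LieSubmodule.mem_bot] at hmem
      exact hmem
    · exact htop
  have hDmem : D ∈ J := hJtop ▸ LieSubmodule.mem_top D
  obtain ⟨r, hr, hDr⟩ := Submodule.mem_map.mp hDmem
  obtain ⟨f, g, rfl⟩ := hr
  refine ⟨f, g, ?_⟩
  have hψ : ψ (τ f + (x1 * τ g - g * τ x1)) = (τ f) • τ + (x1 * τ g - g * τ x1) • τ :=
    add_smul _ _ τ
  rw [aux_brk1, aux_brk, ← hψ, hDr]
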